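/- (Solution of the linear inequality Ax ≤ x, feasibility direction) Let A be an n×n matrix over an idempotent semifield with Tr(A) = tr(A) ⊕ ⋯ ⊕ tr(Aⁿ) ≤ 1. Then for every vector u, the vector x = A* u, where A* = I ⊕ A ⊕ ⋯ ⊕ A^{n−1}, satisfies A x ≤ x. -/

import Mathlib

noncomputable section

variable {K : Type*} [LinearOrderedCommGroupWithZero K]

/-- In a linearly ordered idempotent semifield the zero is the bottom element. -/
instance : OrderBot K where
  bot := 0
  bot_le _ := zero_le'

/-- Tropical matrix product over the idempotent semifield: `{AB}_{ij} = ⊕_k a_{ik} b_{kj}`. -/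
def tmul {n : ℕ} (A B : Fin n → Fin n → K) : Fin n → Fin n → K :=
  fun i j => Finset.univ.sup fun k => A i k * B k j

/-- Entrywise tropical sum of matrices. -/
def tadd {n : ℕ} (A B : Fin n → Fin n → K) : Fin n → Fin n → K :=
  fun i j => A i j ⊔ B i j

/-- The tropical identity matrix. -/
def idMat (n : ℕ) : Fin n → Fin n → K :=
  fun i j => if i = j then 1 else 0

/-- Tropical matrix power. -/
def tpow {n : ℕ} (A : Fin n → Fin n → K) : ℕ → (Fin n → Fin n → K)
  | 0 => idMat n
  | m + 1 => tmul A (tpow A m)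

/-- Tropical trace: `tr A = a₁₁ ⊕ ⋯ ⊕ aₙₙ`. -/
def ttr {n : ℕ} (A : Fin n → Fin n → K) : K :=
  Finset.univ.sup fun i => A i i

/-- Tropical matrix-vector product. -/
def matVec {n : ℕ} (A : Fin n → Fin n → K) (x : Fin n → K) : Fin n → K :=
  fun i => Finset.univ.sup fun k => A i k * x k

/-- The Kleene star `A* = I ⊕ A ⊕ ⋯ ⊕ A^{n−1}`. -/
def star {n : ℕ} (A : Fin n → Fin n → K) : Fin n → Fin n → K :=
  fun i j => (Finset.range n).sup fun m => tpow A m i j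

/-- `Tr(A) = tr A ⊕ ⋯ ⊕ tr Aⁿ`. -/
def Tr {n : ℕ} (A : Fin n → Fin n → K) : K :=
  (Finset.Icc 1 n).sup fun m => ttr (tpow A m)

/-! ### Auxiliary lemmas -/

lemma mul_finset_sup {ι : Type*} (a : K) (s : Finset ι) (f : ι → K) :
    a * s.sup f = s.sup fun x => a * f x := by
  classical
  induction s using Finset.induction with
  | empty => simp only [Finset.sup_empty]; exact mul_zero a
  | insert _ _ h ih =>
    have hm : Monotone (fun x : K => a * x) := fun x y h => mul_le_mul_right h a
    rw [Finset.sup_insert, Finset.sup_insert, hm.map_sup, ih]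

lemma finset_sup_mul {ι : Type*} (a : K) (s : Finset ι) (f : ι → K) :
    s.sup f * a = s.sup fun x => f x * a := by
  classical
  induction s using Finset.induction with
  | empty => simp only [Finset.sup_empty]; exact zero_mul a
  | insert _ _ h ih =>
    have hm : Monotone (fun x : K => x * a) := fun x y h => mul_le_mul_left h a
    rw [Finset.sup_insert, Finset.sup_insert, hm.map_sup, ih]

/-- Weight of a path starting at `i` through nodes `l`. -/
def wt {n : ℕ} (A : Fin n → Fin n → K) : Fin n → List (Fin n) → K
  | _, [] => 1
  | i, (k :: l) => A i k * wt A k l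

/-- Final node of a path starting at `i` through nodes `l`. -/
def fpt {n : ℕ} : Fin n → List (Fin n) → Fin n
  | i, [] => i
  | _, (k :: l) => fpt k l

lemma wt_append {n : ℕ} (A : Fin n → Fin n → K) (i : Fin n) (l₁ l₂ : List (Fin n)) :
    wt A i (l₁ ++ l₂) = wt A i l₁ * wt A (fpt i l₁) l₂ := by
  induction l₁ generalizing i with
  | nil => simp [wt, fpt]
  | cons x t ih => simp [wt, fpt, ih, mul_assoc]

lemma fpt_append {n : ℕ} (i : Fin n) (l₁ l₂ : List (Fin n)) :
    fpt i (l₁ ++ l₂) = fpt (fpt i l₁) l₂ := by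
  induction l₁ generalizing i with
  | nil => simp [fpt]
  | cons x t ih => simp [fpt, ih]

lemma fpt_concat {n : ℕ} (i a : Fin n) (l : List (Fin n)) :
    fpt i (l ++ [a]) = a := by
  rw [fpt_append]; rfl

lemma sup_cons_eq {n m : ℕ} (F : (Fin (m + 1) → Fin n) → K) :
    (Finset.univ.sup fun k : Fin n =>
        Finset.univ.sup fun g : Fin m → Fin n => F (Fin.cons k g)) =
      Finset.univ.sup F := by
  apply le_antisymm
  · exact Finset.sup_le fun k _ => Finset.sup_le fun g _ => Finset.le_sup (Finset.mem_univ _)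
  · refine Finset.sup_le fun f _ => ?_
    have h : F f = F (Fin.cons (f 0) (Fin.tail f)) := by rw [Fin.cons_self_tail]
    rw [h]
    exact le_trans
      (Finset.le_sup (f := fun g => F (Fin.cons (f 0) g)) (Finset.mem_univ (Fin.tail f)))
      (Finset.le_sup (f := fun k => Finset.univ.sup fun g => F (Fin.cons k g))
        (Finset.mem_univ (f 0)))

/-- Path expansion of tropical matrix powers. -/
lemma tpow_eq_sup_paths {n : ℕ} (A : Fin n → Fin n → K) (m : ℕ) (i j : Fin n) :
    tpow A m i j =
      Finset.univ.sup fun f : Fin m → Fin n =>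
        if fpt i (List.ofFn f) = j then wt A i (List.ofFn f) else 0 := by
  induction m generalizing i with
  | zero =>
    have : ∀ f : Fin 0 → Fin n, List.ofFn f = [] := fun f => List.ofFn_zero
    simp only [this, fpt, wt]
    rw [Finset.sup_const Finset.univ_nonempty]
    rfl
  | succ m ih =>
    have h1 : tpow A (m + 1) i j = Finset.univ.sup fun k => A i k * tpow A m k j := rfl
    rw [h1]
    have h2 : ∀ k : Fin n, A i k * tpow A m k j =
        Finset.univ.sup fun g : Fin m → Fin n =>
          if fpt i (List.ofFn (Fin.cons k g)) = j then wt A i (List.ofFn (Fin.cons k g))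
          else 0 := by
      intro k
      rw [ih, mul_finset_sup]
      congr 1
      funext g
      have hofn : List.ofFn (Fin.cons k g) = k :: List.ofFn g := by
        simp [List.ofFn_succ]
      rw [hofn]
      have hf : fpt i (k :: List.ofFn g) = fpt k (List.ofFn g) := rfl
      have hw : wt A i (k :: List.ofFn g) = A i k * wt A k (List.ofFn g) := rfl
      rw [hf, hw, mul_ite, mul_zero]
    simp only [h2]
    exact sup_cons_eq (fun f => if fpt i (List.ofFn f) = j then wt A i (List.ofFn f) else 0)

lemma wt_le_tpow {n : ℕ} (A : Fin n → Fin n → K) {i j : Fin n} {l : List (Fin n)}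
    (h : fpt i l = j) : wt A i l ≤ tpow A l.length i j := by
  rw [tpow_eq_sup_paths]
  have hs := Finset.le_sup (f := fun f : Fin l.length → Fin n =>
    if fpt i (List.ofFn f) = j then wt A i (List.ofFn f) else 0) (Finset.mem_univ l.get)
  simp only [List.ofFn_get, h, if_true] at hs
  exact hs

lemma exists_dup {α : Type*} (l : List α) (h : ¬ l.Nodup) :
    ∃ (a : α) (l₁ l₂ l₃ : List α), l = l₁ ++ a :: l₂ ++ a :: l₃ := by
  induction l with
  | nil => exact absurd List.nodup_nil h
  | cons x t ih =>
    by_cases hx : x ∈ t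
    · obtain ⟨s, r, rfl⟩ := List.append_of_mem hx
      exact ⟨x, [], s, r, by simp⟩
    · have ht : ¬ t.Nodup := fun hn => h (List.nodup_cons.2 ⟨hx, hn⟩)
      obtain ⟨a, l₁, l₂, l₃, rfl⟩ := ih ht
      exact ⟨a, x :: l₁, l₂, l₃, rfl⟩

/-- The weight of a closed path of length between 1 and `n` is at most `1`. -/
lemma cycle_wt_le_one {n : ℕ} (A : Fin n → Fin n → K) (hTr : Tr A ≤ 1)
    {c : Fin n} {l : List (Fin n)} (hc : fpt c l = c) (h1 : l ≠ [])
    (h2 : l.length ≤ n) : wt A c l ≤ 1 := by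
  calc wt A c l ≤ tpow A l.length c c := wt_le_tpow A hc
    _ ≤ ttr (tpow A l.length) :=
        Finset.le_sup (f := fun i => tpow A l.length i i) (Finset.mem_univ c)
    _ ≤ Tr A := Finset.le_sup (f := fun m => ttr (tpow A m)) (Finset.mem_Icc.2
        ⟨Nat.one_le_iff_ne_zero.2 (by simpa using h1), h2⟩)
    _ ≤ 1 := hTr

lemma shorten_path {n : ℕ} (A : Fin n → Fin n → K) (hTr : Tr A ≤ 1)
    (i j a : Fin n) (t c l₃ : List (Fin n))
    (hfa : fpt i t = a) (hcyc : fpt a c = a) (hcne : c ≠ [])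
    (hlen : (t ++ (c ++ l₃)).length = n) (hfin : fpt i (t ++ (c ++ l₃)) = j) :
    wt A i (t ++ (c ++ l₃)) ≤ star A i j := by
  have hfin3 : fpt a l₃ = j := by
    rw [fpt_append, hfa, fpt_append, hcyc] at hfin; exact hfin
  have hclen : c.length ≤ n := by
    simp only [List.length_append] at hlen; omega
  have hc1 : wt A a c ≤ 1 := cycle_wt_le_one A hTr hcyc hcne hclen
  have hshort : fpt i (t ++ l₃) = j := by rw [fpt_append, hfa]; exact hfin3
  have hcpos : 0 < c.length := List.length_pos_iff.2 hcne
  have hshortlen : (t ++ l₃).length < n := by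
    simp only [List.length_append] at hlen ⊢; omega
  calc wt A i (t ++ (c ++ l₃))
      = wt A i t * (wt A a c * wt A a l₃) := by
        rw [wt_append, hfa, wt_append, hcyc]
    _ ≤ wt A i t * (1 * wt A a l₃) := mul_le_mul_right (mul_le_mul_left hc1 _) _
    _ = wt A i (t ++ l₃) := by rw [one_mul, wt_append, hfa]
    _ ≤ tpow A (t ++ l₃).length i j := wt_le_tpow A hshort
    _ ≤ star A i j := Finset.le_sup (f := fun m => tpow A m i j)
        (Finset.mem_range.2 hshortlen)

lemma wt_le_star {n : ℕ} (A : Fin n → Fin n → K) (hTr : Tr A ≤ 1)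
    (l : List (Fin n)) (i j : Fin n) (hlen : l.length ≤ n) (hfin : fpt i l = j) :
    wt A i l ≤ star A i j := by
  rcases lt_or_eq_of_le hlen with hlt | heq
  · exact le_trans (wt_le_tpow A hfin)
      (Finset.le_sup (f := fun m => tpow A m i j) (Finset.mem_range.2 hlt))
  · -- the path visits `n + 1` nodes, so some node repeats
    have hnd : ¬ (i :: l).Nodup := by
      intro hnd
      have := hnd.length_le_card
      simp only [List.length_cons, Fintype.card_fin, heq] at this
      omega
    obtain ⟨a, l₁, l₂, l₃, hdec⟩ := exists_dup _ hnd
    cases l₁ with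
    | nil =>
      rw [List.nil_append] at hdec
      injection hdec with h1 h2
      have h2' : l = ([] : List (Fin n)) ++ ((l₂ ++ [a]) ++ l₃) := by simp [h2]
      have hlen' : (([] : List (Fin n)) ++ ((l₂ ++ [a]) ++ l₃)).length = n := by
        rw [← h2']; exact heq
      have hfin' : fpt i (([] : List (Fin n)) ++ ((l₂ ++ [a]) ++ l₃)) = j := by
        rw [← h2']; exact hfin
      rw [h2']
      exact shorten_path A hTr i j a [] (l₂ ++ [a]) l₃ h1 (fpt_concat a a l₂)
        (by simp) hlen' hfin'
    | cons x t =>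
      simp only [List.cons_append, List.cons.injEq] at hdec
      obtain ⟨-, h2⟩ := hdec
      have h2' : l = (t ++ [a]) ++ ((l₂ ++ [a]) ++ l₃) := by simp [h2]
      have hlen' : ((t ++ [a]) ++ ((l₂ ++ [a]) ++ l₃)).length = n := by
        rw [← h2']; exact heq
      have hfin' : fpt i ((t ++ [a]) ++ ((l₂ ++ [a]) ++ l₃)) = j := by
        rw [← h2']; exact hfin
      rw [h2']
      exact shorten_path A hTr i j a (t ++ [a]) (l₂ ++ [a]) l₃ (fpt_concat i a t)
        (fpt_concat a a l₂) (by simp) hlen' hfin'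

lemma tpow_le_star {n : ℕ} (A : Fin n → Fin n → K) (hTr : Tr A ≤ 1)
    {m : ℕ} (hm : m ≤ n) (i j : Fin n) : tpow A m i j ≤ star A i j := by
  rw [tpow_eq_sup_paths]
  refine Finset.sup_le fun f _ => ?_
  by_cases h : fpt i (List.ofFn f) = j
  · rw [if_pos h]
    exact wt_le_star A hTr _ i j (by simpa using hm) h
  · rw [if_neg h]
    exact zero_le'

/-- If `Tr(A) ≤ 1` then for every vector `u` the vector `x = A* u` solves `A x ≤ x`. -/
theorem star_solves_inequality {n : ℕ} (A : Fin n → Fin n → K) (hTr : Tr A ≤ 1) :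
    ∀ u : Fin n → K, ∀ i, matVec A (matVec (star A) u) i ≤ matVec (star A) u i := by
  intro u i
  have h1 : matVec A (matVec (star A) u) i =
      Finset.univ.sup fun t => tmul A (star A) i t * u t := by
    show (Finset.univ.sup fun k => A i k * Finset.univ.sup fun t => star A k t * u t) = _
    calc (Finset.univ.sup fun k => A i k * Finset.univ.sup fun t => star A k t * u t)
        = Finset.univ.sup fun k => Finset.univ.sup fun t => A i k * star A k t * u t := by
          simp_rw [mul_finset_sup, mul_assoc]
      _ = Finset.univ.sup fun t => Finset.univ.sup fun k => A i k * star A k t * u t :=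
          Finset.sup_comm _ _ _
      _ = Finset.univ.sup fun t => tmul A (star A) i t * u t := by
          simp_rw [tmul, finset_sup_mul]
  rw [h1]
  refine Finset.sup_le fun t _ => ?_
  have h2 : tmul A (star A) i t ≤ star A i t := by
    refine Finset.sup_le fun k _ => ?_
    have hstar : star A k t = (Finset.range n).sup fun m => tpow A m k t := rfl
    rw [hstar, mul_finset_sup]
    refine Finset.sup_le fun m hm => ?_
    have hle : A i k * tpow A m k t ≤ Finset.univ.sup fun k' => A i k' * tpow A m k' t :=
      Finset.le_sup (f := fun k' => A i k' * tpow A m k' t) (Finset.mem_univ k)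
    exact le_trans hle
      (tpow_le_star A hTr (Nat.succ_le_of_lt (Finset.mem_range.1 hm)) i t)
  calc tmul A (star A) i t * u t ≤ star A i t * u t := mul_le_mul_left h2 _
    _ ≤ matVec (star A) u i :=
        Finset.le_sup (f := fun t' => star A i t' * u t') (Finset.mem_univ t)
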